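/- arXiv:2602.14776 — 6 statements merged into one kernel-verified Lean document; each statement's English description precedes it below -/
import Mathlib

section
/- Let σ_t^2 = 1/(t·(log(e/t))^3) for t ∈ (0,1). Then ∫_0^1 σ_t^2 · log(σ_t^2) dt < ∞, but for every ε ∈ (0,1), ∫_0^1 σ_t^{2(1+ε)} dt = ∞. -/
open MeasureTheory Real Set Filter

lemma aux_int : IntegrableOn (fun t : ℝ => (t * (1 - Real.log t)^2)⁻¹) (Set.Ioc 0 1) := by
  have key := intervalIntegral.integrableOn_deriv_of_nonneg (a := (0:ℝ)) (b := 1)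
    (g := fun t => if t ≤ 0 then (0:ℝ) else (1 - Real.log t)⁻¹)
    (g' := fun t : ℝ => (t * (1 - Real.log t)^2)⁻¹) ?_ ?_ ?_
  · exact key
  · -- continuity on Icc 0 1
    intro x hx
    rcases eq_or_lt_of_le hx.1 with h0 | h0
    · -- x = 0
      subst h0
      have hF0 : (if (0:ℝ) ≤ 0 then (0:ℝ) else (1 - Real.log 0)⁻¹) = 0 := by simp
      rw [ContinuousWithinAt, hF0]
      have hsub : Set.Icc (0:ℝ) 1 ⊆ insert 0 (Set.Ioi 0) := by
        intro y hy
        rcases eq_or_lt_of_le hy.1 with h | h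
        · exact Or.inl h.symm
        · exact Or.inr h
      refine Filter.Tendsto.mono_left ?_ (nhdsWithin_mono _ hsub)
      rw [nhdsWithin_insert]
      refine Filter.Tendsto.sup ?_ ?_
      · simpa using tendsto_pure_nhds (fun t : ℝ => if t ≤ 0 then (0:ℝ) else (1 - Real.log t)⁻¹) 0
      · have h1 : Tendsto (fun t : ℝ => 1 - Real.log t) (nhdsWithin 0 (Set.Ioi 0)) atTop := by
          have := Real.tendsto_log_nhdsGT_zero
          have h2 : Tendsto (fun t : ℝ => -Real.log t) (nhdsWithin 0 (Set.Ioi 0)) atTop :=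
            Filter.tendsto_neg_atBot_atTop.comp this
          have h3 := tendsto_atTop_add_const_left _ (1:ℝ) h2
          simpa [sub_eq_add_neg] using h3
        have h4 : Tendsto (fun t : ℝ => (1 - Real.log t)⁻¹) (nhdsWithin 0 (Set.Ioi 0)) (nhds 0) :=
          h1.inv_tendsto_atTop
        refine h4.congr' ?_
        filter_upwards [self_mem_nhdsWithin] with t ht
        simp [not_le.mpr (Set.mem_Ioi.mp ht)]
    · -- x > 0
      have hc : ContinuousAt (fun t : ℝ => (1 - Real.log t)⁻¹) x := by
        have hlog : ContinuousAt Real.log x := Real.continuousAt_log (ne_of_gt h0)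
        have : ContinuousAt (fun t : ℝ => 1 - Real.log t) x := continuousAt_const.sub hlog
        apply this.inv₀
        have : Real.log x ≤ 0 := Real.log_nonpos h0.le hx.2
        nlinarith
      have heq : (fun t : ℝ => if t ≤ 0 then (0:ℝ) else (1 - Real.log t)⁻¹)
          =ᶠ[nhds x] (fun t : ℝ => (1 - Real.log t)⁻¹) := by
        filter_upwards [eventually_gt_nhds h0] with t ht
        simp [not_le.mpr ht]
      exact (hc.congr heq.symm).continuousWithinAt
  · -- derivative
    intro x hx
    have hx0 : (0:ℝ) < x := hx.1
    have hne : (1:ℝ) - Real.log x ≠ 0 := by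
      have : Real.log x < 0 := Real.log_neg hx0 hx.2
      linarith
    have h1 : HasDerivAt (fun t : ℝ => 1 - Real.log t) (-x⁻¹) x := by
      simpa using (Real.hasDerivAt_log (ne_of_gt hx0)).const_sub 1
    have h2 := h1.inv hne
    have heq : (fun t : ℝ => if t ≤ 0 then (0:ℝ) else (1 - Real.log t)⁻¹)
        =ᶠ[nhds x] (fun t : ℝ => (1 - Real.log t)⁻¹) := by
      filter_upwards [eventually_gt_nhds hx0] with t ht
      simp [not_le.mpr ht]
    refine (HasDerivAt.congr_of_eventuallyEq ?_ heq)
    rw [neg_neg, div_eq_mul_inv, ← mul_inv] at h2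
    exact h2
  · -- nonneg
    intro x hx
    have hx0 : (0:ℝ) < x := hx.1
    positivity

theorem stmt_3 (σ2 : ℝ → ℝ)
    (hσ2 : ∀ t ∈ Set.Ioo (0:ℝ) 1, σ2 t = 1 / (t * (Real.log (Real.exp 1 / t)) ^ 3)) :
    MeasureTheory.IntegrableOn (fun t => σ2 t * Real.log (σ2 t)) (Set.Ioo (0:ℝ) 1) ∧
    ∀ ε : ℝ, 0 < ε → ε < 1 →
      ¬ MeasureTheory.IntegrableOn (fun t => (σ2 t) ^ (1 + ε)) (Set.Ioo (0:ℝ) 1) := by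
  have hlog : ∀ t ∈ Set.Ioo (0:ℝ) 1, Real.log (Real.exp 1 / t) = 1 - Real.log t := by
    intro t ht
    rw [Real.log_div (Real.exp_ne_zero 1) (ne_of_gt ht.1), Real.log_exp]
  have hσ : ∀ t ∈ Set.Ioo (0:ℝ) 1, σ2 t = (t * (1 - Real.log t) ^ 3)⁻¹ := by
    intro t ht
    rw [hσ2 t ht, hlog t ht, one_div]
  have hcfact : ∀ t ∈ Set.Ioo (0:ℝ) 1, 1 < 1 - Real.log t := by
    intro t ht
    have : Real.log t < 0 := Real.log_neg ht.1 ht.2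
    linarith
  have hypos : ∀ t ∈ Set.Ioo (0:ℝ) 1, 0 < t * (1 - Real.log t) ^ 3 := by
    intro t ht
    have := hcfact t ht
    have := ht.1
    positivity
  have hlogσ : ∀ t ∈ Set.Ioo (0:ℝ) 1,
      Real.log ((t * (1 - Real.log t) ^ 3)⁻¹)
        = (1 - Real.log t) - 1 - 3 * Real.log (1 - Real.log t) := by
    intro t ht
    have hc0 : (0:ℝ) < 1 - Real.log t := lt_trans one_pos (hcfact t ht)
    rw [Real.log_inv, Real.log_mul (ne_of_gt ht.1) (by positivity), Real.log_pow]
    push_cast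
    ring
  constructor
  · -- Part 1
    have hbig : IntegrableOn (fun t : ℝ => 2 * (t * (1 - Real.log t)^2)⁻¹)
        (Set.Ioo 0 1) := (aux_int.mono_set Set.Ioo_subset_Ioc_self).const_mul 2
    have hGcont : ContinuousOn
        (fun t : ℝ => (t * (1 - Real.log t) ^ 3)⁻¹ * Real.log ((t * (1 - Real.log t) ^ 3)⁻¹))
        (Set.Ioo 0 1) := by
      have h1 : ContinuousOn (fun t : ℝ => t * (1 - Real.log t) ^ 3) (Set.Ioo 0 1) := by
        refine continuousOn_id.mul (ContinuousOn.pow ?_ 3)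
        exact continuousOn_const.sub (Real.continuousOn_log.mono (by
          intro t ht; exact ne_of_gt ht.1))
      have hne : ∀ t ∈ Set.Ioo (0:ℝ) 1, (t * (1 - Real.log t) ^ 3)⁻¹ ≠ 0 := by
        intro t ht; exact inv_ne_zero (ne_of_gt (hypos t ht))
      have h2 : ContinuousOn (fun t : ℝ => (t * (1 - Real.log t) ^ 3)⁻¹) (Set.Ioo 0 1) :=
        h1.inv₀ (fun t ht => ne_of_gt (hypos t ht))
      exact h2.mul (h2.log hne)
    have hae : (fun t => σ2 t * Real.log (σ2 t))
        =ᵐ[volume.restrict (Set.Ioo (0:ℝ) 1)]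
        (fun t : ℝ => (t * (1 - Real.log t) ^ 3)⁻¹ * Real.log ((t * (1 - Real.log t) ^ 3)⁻¹)) := by
      refine (ae_restrict_iff' measurableSet_Ioo).mpr (ae_of_all _ fun t ht => ?_)
      simp only [hσ t ht]
    refine hbig.mono' ((hGcont.aestronglyMeasurable measurableSet_Ioo).congr hae.symm) ?_
    refine (ae_restrict_iff' measurableSet_Ioo).mpr (ae_of_all _ fun t ht => ?_)
    have hc1 : 1 < 1 - Real.log t := hcfact t ht
    have hc0 : (0:ℝ) < 1 - Real.log t := lt_trans one_pos hc1
    set c := 1 - Real.log t with hcdef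
    have hy : 0 < t * c ^ 3 := hypos t ht
    have hlogc0 : 0 ≤ Real.log c := Real.log_nonneg hc1.le
    have hlogc1 : Real.log c ≤ c - 1 := Real.log_le_sub_one_of_pos hc0
    have habs : |Real.log ((t * c ^ 3)⁻¹)| ≤ 2 * c := by
      rw [hlogσ t ht]
      rw [abs_le]
      constructor <;> nlinarith
    rw [hσ t ht, Real.norm_eq_abs, abs_mul, abs_of_pos (inv_pos.mpr hy)]
    have h1 : (t * c ^ 3)⁻¹ * |Real.log ((t * c ^ 3)⁻¹)| ≤ (t * c ^ 3)⁻¹ * (2 * c) :=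
      mul_le_mul_of_nonneg_left habs (inv_pos.mpr hy).le
    refine h1.trans (le_of_eq ?_)
    have ht0 : (0:ℝ) < t := ht.1
    field_simp
  · -- Part 2
    intro ε hε0 hε1 hInt
    have hb : ∀ᶠ x : ℝ in atTop, x ^ (6:ℝ) * Real.exp (-(ε/2) * x) ≤ 1 :=
      (tendsto_rpow_mul_exp_neg_mul_atTop_nhds_zero 6 (ε/2) (by positivity)).eventually
        (eventually_le_nhds (by norm_num))
    rw [eventually_atTop] at hb
    obtain ⟨C, hC⟩ := hb
    set C' := max C 1 with hC'def
    set δ := Real.exp (1 - C') with hδdef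
    have hδ0 : 0 < δ := Real.exp_pos _
    have hδ1 : δ ≤ 1 := by
      rw [hδdef, Real.exp_le_one_iff]
      have : (1:ℝ) ≤ C' := le_max_right _ _
      linarith
    have hI2 : IntegrableOn (fun t => (σ2 t) ^ (1 + ε)) (Set.Ioo 0 δ) :=
      hInt.mono_set (Set.Ioo_subset_Ioo le_rfl hδ1)
    -- the minorant
    set g : ℝ → ℝ := fun t => Real.exp (-1) * t ^ (-(1 + ε/2)) with hgdef
    have hgmeas : AEStronglyMeasurable g (volume.restrict (Set.Ioo (0:ℝ) δ)) := by
      apply Measurable.aestronglyMeasurable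
      fun_prop
    have hbound : ∀ t ∈ Set.Ioo (0:ℝ) δ, ‖g t‖ ≤ (σ2 t) ^ (1 + ε) := by
      intro t ht
      have ht0 : (0:ℝ) < t := ht.1
      have htmem : t ∈ Set.Ioo (0:ℝ) 1 := ⟨ht0, lt_of_lt_of_le ht.2 hδ1⟩
      have hcC : C' < 1 - Real.log t := by
        have : Real.log t < 1 - C' := by
          have := Real.log_lt_log ht0 ht.2
          rwa [hδdef, Real.log_exp] at this
        linarith
      set c := 1 - Real.log t with hcdef
      have hc1 : 1 < c := lt_of_le_of_lt (le_max_right C 1) hcC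
      have hc0 : (0:ℝ) < c := lt_trans one_pos hc1
      have h6 : 6 * Real.log c ≤ ε / 2 * c := by
        have h := hC c (le_of_lt (lt_of_le_of_lt (le_max_left C 1) hcC))
        have h2 : c ^ (6:ℝ) ≤ Real.exp (ε/2 * c) := by
          have h3 := mul_le_mul_of_nonneg_right h (Real.exp_pos (ε/2 * c)).le
          rw [one_mul, mul_assoc, ← Real.exp_add] at h3
          have : -(ε/2) * c + ε/2 * c = 0 := by ring
          rw [this, Real.exp_zero, mul_one] at h3
          exact h3
        have h4 := Real.log_le_log (by positivity) h2
        rwa [Real.log_rpow hc0, Real.log_exp] at h4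
      have hlogc0 : 0 ≤ Real.log c := Real.log_nonneg hc1.le
      have hy : 0 < t * c ^ 3 := hypos t htmem
      have hlogt : Real.log t = 1 - c := by rw [hcdef]; ring
      -- rewrite both sides as exponentials
      have hgval : ‖g t‖ = Real.exp (-1 + -(1 + ε/2) * (1 - c)) := by
        rw [hgdef]
        simp only
        rw [Real.rpow_def_of_pos ht0, hlogt, Real.norm_eq_abs, ← Real.exp_add]
        rw [abs_of_pos (Real.exp_pos _)]
        ring_nf
      have hfval : (σ2 t) ^ (1 + ε) = Real.exp ((c - 1 - 3 * Real.log c) * (1 + ε)) := by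
        rw [hσ t htmem, Real.rpow_def_of_pos (inv_pos.mpr hy), hlogσ t htmem]
      rw [hgval, hfval, Real.exp_le_exp]
      nlinarith
    have hgInt : IntegrableOn g (Set.Ioo 0 δ) := by
      refine hI2.mono' hgmeas ?_
      exact (ae_restrict_iff' measurableSet_Ioo).mpr (ae_of_all _ hbound)
    have hrInt : IntegrableOn (fun t : ℝ => t ^ (-(1 + ε/2))) (Set.Ioo 0 δ) := by
      have h := hgInt.const_mul (Real.exp 1)
      refine IntegrableOn.congr_fun h ?_ measurableSet_Ioo
      intro t ht
      rw [hgdef]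
      simp only
      rw [← mul_assoc, ← Real.exp_add]
      norm_num
    rw [intervalIntegral.integrableOn_Ioo_rpow_iff hδ0] at hrInt
    linarith
end

section
/- Let X be a continuous martingale under Q with absolutely continuous quadratic variation of density Σ_t, satisfying ⟨X⟩_1 = 1 Q-almost surely, where X solves dX_t = σ(X_t) dB_t. Then the specific relative entropy h(W‖Q) = (1/2)·E_Q[∫_0^1 (1/Σ_t − log(1/Σ_t) − 1) dt evaluated along the time-change] equals the reciprocal specific relative entropy 𝔥(Q‖W) = (1/2)·E_Q[∫_0^1 (Σ_t log Σ_t + 1 − Σ_t) dt]. -/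
open MeasureTheory

open MeasureTheory Set Filter Topology intervalIntegral Metric

lemma ae_hasDerivAt_primitive' {f : ℝ → ℝ} (hfi : IntervalIntegrable f volume 0 1) :
    ∀ᵐ x, x ∈ Set.Ioo (0:ℝ) 1 → HasDerivAt (fun t => ∫ u in (0:ℝ)..t, f u) (f x) x := by
  set g : ℝ → ℝ := (Set.Ioc (0:ℝ) 1).indicator f with hg
  have hgint : Integrable g := by
    rw [hg, integrable_indicator_iff measurableSet_Ioc]
    exact (intervalIntegrable_iff_integrableOn_Ioc_of_le zero_le_one).mp hfi
  have hloc : LocallyIntegrable g := hgint.locallyIntegrable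
  filter_upwards [IsUnifLocDoublingMeasure.ae_tendsto_average_norm_sub (μ := volume) hloc 2]
    with x hx hmem
  have δlim : Tendsto (fun y : ℝ => |y - x| / 2) (𝓝[≠] x) (𝓝[>] 0) := by
    rw [tendsto_nhdsWithin_iff]
    constructor
    · apply Tendsto.mono_left _ nhdsWithin_le_nhds
      have : Tendsto (fun y : ℝ => |y - x| / 2) (𝓝 x) (𝓝 (|x - x| / 2)) :=
        (((continuous_id.sub continuous_const).abs.div_const 2).tendsto x)
      simpa using this
    · filter_upwards [self_mem_nhdsWithin] with y hy
      have : y - x ≠ 0 := sub_ne_zero.mpr hy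
      have := abs_pos.mpr this
      exact Set.mem_Ioi.mpr (by positivity)
  have xmem : ∀ᶠ y : ℝ in 𝓝[≠] x, x ∈ closedBall ((x + y) / 2) (2 * (|y - x| / 2)) := by
    filter_upwards with y
    rw [mem_closedBall, Real.dist_eq, show x - (x + y) / 2 = (x - y) / 2 by ring, abs_div,
      abs_sub_comm]
    rw [abs_of_pos (show (0:ℝ) < 2 by norm_num)]
    nlinarith [abs_nonneg (y - x)]
  have Htend : Tendsto (fun y : ℝ =>
      ⨍ u in closedBall ((x + y) / 2) (|y - x| / 2), ‖g u - g x‖) (𝓝[≠] x) (𝓝 0) :=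
    hx (fun y => (x + y) / 2) (fun y => |y - x| / 2) δlim xmem
  rw [hasDerivAt_iff_tendsto_slope]
  have hgx : g x = f x := Set.indicator_of_mem (Set.mem_Ioc.mpr ⟨hmem.1, hmem.2.le⟩) f
  have key : ∀ᶠ y in 𝓝[≠] x,
      |slope (fun t => ∫ u in (0:ℝ)..t, f u) x y - f x|
        ≤ ⨍ u in closedBall ((x + y) / 2) (|y - x| / 2), ‖g u - g x‖ := by
    have hIoo : Set.Ioo (0:ℝ) 1 ∈ 𝓝 x := isOpen_Ioo.mem_nhds hmem
    filter_upwards [nhdsWithin_le_nhds hIoo, self_mem_nhdsWithin] with y hy (hyx : y ≠ x)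
    have hyx' : y - x ≠ 0 := sub_ne_zero.mpr hyx
    have habs : (0:ℝ) < |y - x| := abs_pos.mpr hyx'
    have hsub : Set.uIcc x y ⊆ Set.Ioo 0 1 := Set.ordConnected_Ioo.uIcc_subset hmem hy
    have hfx : IntervalIntegrable f volume 0 x :=
      hfi.mono_set (by
        rw [Set.uIcc_of_le zero_le_one, Set.uIcc_of_le hmem.1.le]
        exact Set.Icc_subset_Icc le_rfl hmem.2.le)
    have hfy : IntervalIntegrable f volume 0 y :=
      hfi.mono_set (by
        rw [Set.uIcc_of_le zero_le_one, Set.uIcc_of_le hy.1.le]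
        exact Set.Icc_subset_Icc le_rfl hy.2.le)
    have hdiff : (∫ u in (0:ℝ)..y, f u) - (∫ u in (0:ℝ)..x, f u) = ∫ u in x..y, f u :=
      integral_interval_sub_left hfy hfx
    have hcongr : (∫ u in x..y, f u) = ∫ u in x..y, g u := by
      apply intervalIntegral.integral_congr
      intro u hu
      exact (Set.indicator_of_mem (Set.mem_Ioc.mpr ⟨(hsub hu).1, (hsub hu).2.le⟩) f).symm
    have e1 : (∫ u in x..y, (g u - g x)) = (∫ u in x..y, g u) - (y - x) * g x := by
      rw [intervalIntegral.integral_sub hgint.intervalIntegrable intervalIntegrable_const,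
        intervalIntegral.integral_const, smul_eq_mul]
    have hslope : slope (fun t => ∫ u in (0:ℝ)..t, f u) x y - f x
        = (y - x)⁻¹ * ∫ u in x..y, (g u - g x) := by
      rw [slope_def_field, e1, ← hcongr, ← hdiff, hgx]
      field_simp
    rw [hslope, abs_mul, abs_inv]
    have hIle : |∫ u in x..y, (g u - g x)| ≤ ∫ u in Set.uIoc x y, ‖g u - g x‖ := by
      simpa [Real.norm_eq_abs] using
        intervalIntegral.norm_integral_le_integral_norm_uIoc
          (f := fun u => g u - g x) (a := x) (b := y) (μ := volume)
    have hball : Set.uIoc x y ⊆ closedBall ((x + y) / 2) (|y - x| / 2) := by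
      rw [Real.closedBall_eq_Icc, Set.uIoc]
      rcases le_total x y with h | h
      · rw [abs_of_nonneg (sub_nonneg.mpr h)]
        intro u hu
        simp only [Set.mem_Ioc, min_eq_left h, max_eq_right h] at hu
        exact ⟨by linarith [hu.1, hu.2], by linarith [hu.1, hu.2]⟩
      · rw [abs_of_nonpos (sub_nonpos.mpr h)]
        intro u hu
        simp only [Set.mem_Ioc, min_eq_right h, max_eq_left h] at hu
        exact ⟨by linarith [hu.1, hu.2], by linarith [hu.1, hu.2]⟩
    have hnormint : IntegrableOn (fun u => ‖g u - g x‖)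
        (closedBall ((x + y) / 2) (|y - x| / 2)) :=
      ((hgint.integrableOn.sub (integrableOn_const
        (measure_closedBall_lt_top).ne)).norm)
    have hJle : (∫ u in Set.uIoc x y, ‖g u - g x‖)
        ≤ ∫ u in closedBall ((x + y) / 2) (|y - x| / 2), ‖g u - g x‖ := by
      apply setIntegral_mono_set hnormint
      · filter_upwards with u using norm_nonneg _
      · exact HasSubset.Subset.eventuallyLE hball
    have hvol : (volume (closedBall ((x + y) / 2) (|y - x| / 2))).toReal = |y - x| := by
      rw [Real.volume_closedBall, ENNReal.toReal_ofReal (by positivity)]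
      ring
    rw [setAverage_eq, measureReal_def, hvol, smul_eq_mul]
    have h1 : |(y - x)⁻¹| = |y - x|⁻¹ := by rw [abs_inv]
    calc |y - x|⁻¹ * |∫ u in x..y, (g u - g x)|
        ≤ |y - x|⁻¹ * ∫ u in Set.uIoc x y, ‖g u - g x‖ := by
          apply mul_le_mul_of_nonneg_left hIle (by positivity)
      _ ≤ |y - x|⁻¹ * ∫ u in closedBall ((x + y) / 2) (|y - x| / 2), ‖g u - g x‖ :=
          mul_le_mul_of_nonneg_left hJle (by positivity)
  have habs0 : Tendsto (fun y => |slope (fun t => ∫ u in (0:ℝ)..t, f u) x y - f x|)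
      (𝓝[≠] x) (𝓝 0) :=
    squeeze_zero' (by filter_upwards with y using abs_nonneg _) key Htend
  rw [tendsto_iff_norm_sub_tendsto_zero]
  simpa [Real.norm_eq_abs] using habs0

lemma cov_aux {f τ : ℝ → ℝ} (H : ℝ → ℝ)
    (hfpos : ∀ s, 0 < f s)
    (hfi : IntervalIntegrable f volume 0 1)
    (hA1 : (∫ s in (0:ℝ)..1, f s) = 1)
    (hτ : ∀ s ∈ Set.Icc (0:ℝ) 1, τ (∫ u in (0:ℝ)..s, f u) = s) :
    ∫ t in (0:ℝ)..1, H (τ t) = ∫ s in (0:ℝ)..1, f s * H s := by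
  set A : ℝ → ℝ := fun t => ∫ u in (0:ℝ)..t, f u with hAdef
  -- a measurable full-measure subset of `Ioo 0 1` where `A` is differentiable
  have hae := ae_hasDerivAt_primitive' hfi
  obtain ⟨N, hNsub, hNmeas, hN0⟩ :=
    exists_measurable_superset_of_null (ae_iff.mp hae)
  set s : Set ℝ := Set.Ioo 0 1 \ N with hsdef
  have hsmeas : MeasurableSet s := measurableSet_Ioo.diff hNmeas
  have hs_sub : s ⊆ Set.Ioo 0 1 := Set.diff_subset
  have hderiv : ∀ x ∈ s, HasDerivAt A (f x) x := by
    intro x hx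
    by_contra hcon
    exact hx.2 (hNsub (fun himp => hcon (himp hx.1)))
  have hs_eq : s =ᵐ[volume] Set.Ioo (0:ℝ) 1 := by
    rw [MeasureTheory.ae_eq_set]
    constructor
    · have : s \ Set.Ioo (0:ℝ) 1 = ∅ := Set.diff_eq_empty.mpr hs_sub
      rw [this]; exact measure_empty
    · refine measure_mono_null (fun x hx => ?_) hN0
      by_contra hxN
      exact hx.2 ⟨hx.1, hxN⟩
  have hs_vol : volume s = 1 := by
    rw [hsdef, measure_diff_null hN0, Real.volume_Ioo]
    norm_num
  -- strict monotonicity of A on [0,1]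
  have hmono : StrictMonoOn A (Set.Icc 0 1) := by
    intro a ha b hb hab
    have hsubi : Set.uIcc a b ⊆ Set.uIcc (0:ℝ) 1 := by
      rw [Set.uIcc_of_le zero_le_one]
      exact Set.ordConnected_Icc.uIcc_subset ha hb
    have hfab : IntervalIntegrable f volume a b := hfi.mono_set hsubi
    have hf0a : IntervalIntegrable f volume 0 a := hfi.mono_set (by
      rw [Set.uIcc_of_le zero_le_one, Set.uIcc_of_le ha.1]
      exact Set.Icc_subset_Icc le_rfl ha.2)
    have hf0b : IntervalIntegrable f volume 0 b := hfi.mono_set (by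
      rw [Set.uIcc_of_le zero_le_one, Set.uIcc_of_le hb.1]
      exact Set.Icc_subset_Icc le_rfl hb.2)
    have h2 : A b - A a = ∫ u in a..b, f u :=
      intervalIntegral.integral_interval_sub_left hf0b hf0a
    have h3 : 0 < ∫ u in a..b, f u :=
      intervalIntegral.intervalIntegral_pos_of_pos_on hfab (fun x _ => hfpos x) hab
    linarith
  have hinj : Set.InjOn A s :=
    (hmono.injOn).mono (hs_sub.trans Set.Ioo_subset_Icc_self)
  have hderivW : ∀ x ∈ s, HasDerivWithinAt A (f x) s x :=
    fun x hx => (hderiv x hx).hasDerivWithinAt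
  have hcov : ∀ g : ℝ → ℝ, ∫ u in A '' s, g u = ∫ x in s, |f x| • g (A x) :=
    fun g => integral_image_eq_integral_abs_deriv_smul hsmeas hderivW hinj g
  -- A maps s into Icc 0 1
  have hA01 : ∀ x ∈ s, A x ∈ Set.Icc (0:ℝ) 1 := by
    intro x hx
    have hx' := hs_sub hx
    have hf0x : IntervalIntegrable f volume 0 x := hfi.mono_set (by
      rw [Set.uIcc_of_le zero_le_one, Set.uIcc_of_le hx'.1.le]
      exact Set.Icc_subset_Icc le_rfl hx'.2.le)
    constructor
    · exact intervalIntegral.integral_nonneg hx'.1.le (fun u _ => (hfpos u).le)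
    · have h2 : A 1 - A x = ∫ u in x..1, f u :=
        intervalIntegral.integral_interval_sub_left hfi hf0x
      have h3 : 0 ≤ ∫ u in x..1, f u :=
        intervalIntegral.integral_nonneg hx'.2.le (fun u _ => (hfpos u).le)
      have : A 1 = 1 := hA1
      linarith
  have hAs_meas : MeasurableSet (A '' s) :=
    measurable_image_of_fderivWithin hsmeas
      (fun x hx => (hderivW x hx).hasFDerivWithinAt) hinj
  have hAs_vol : volume (A '' s) = 1 := by
    have h1 : ∫ u in A '' s, (1:ℝ) = ∫ x in s, |f x| • (1:ℝ) := hcov (fun _ => 1)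
    have h2 : (∫ x in s, |f x| • (1:ℝ)) = 1 := by
      rw [show (∫ x in s, |f x| • (1:ℝ)) = ∫ x in s, f x from
        setIntegral_congr_fun hsmeas (fun x _ => by simp [abs_of_pos (hfpos x)]),
        setIntegral_congr_set hs_eq, ← integral_Ioc_eq_integral_Ioo,
        ← intervalIntegral.integral_of_le zero_le_one]
      exact hA1
    rw [← ENNReal.toReal_eq_one_iff]
    have h4 : ∫ u in A '' s, (1:ℝ) = (volume (A '' s)).toReal := by
      simp [setIntegral_const, measureReal_def]
    rw [← h4, h1, h2]
  have him_ae : A '' s =ᵐ[volume] Set.Ioc (0:ℝ) 1 := by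
    rw [MeasureTheory.ae_eq_set]
    have hIccAs : volume (Set.Icc (0:ℝ) 1 \ A '' s) = 0 := by
      rw [measure_diff (fun x hx => Set.mem_Icc.mpr ?mem) hAs_meas.nullMeasurableSet
        (by rw [hAs_vol]; exact ENNReal.one_ne_top), hAs_vol, Real.volume_Icc]
      · norm_num
      case mem =>
        obtain ⟨y, hy, rfl⟩ := hx
        exact ⟨(hA01 y hy).1, (hA01 y hy).2⟩
    constructor
    · have hsub0 : A '' s \ Set.Ioc 0 1 ⊆ {(0:ℝ)} := by
        rintro x ⟨⟨y, hy, rfl⟩, hnot⟩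
        have h01 := hA01 y hy
        have hno : ¬(0 < A y ∧ A y ≤ 1) := fun h => hnot (Set.mem_Ioc.mpr h)
        rcases lt_or_eq_of_le h01.1 with h | h
        · exact ((hno ⟨h, h01.2⟩).elim)
        · exact Set.mem_singleton_iff.mpr h.symm
      exact measure_mono_null hsub0 Real.volume_singleton
    · refine measure_mono_null (fun x hx => ?_) hIccAs
      exact ⟨Set.Ioc_subset_Icc_self hx.1, hx.2⟩
  calc ∫ t in (0:ℝ)..1, H (τ t) = ∫ t in Set.Ioc (0:ℝ) 1, H (τ t) :=
        intervalIntegral.integral_of_le zero_le_one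
    _ = ∫ t in A '' s, H (τ t) := (setIntegral_congr_set him_ae).symm
    _ = ∫ x in s, |f x| • H (τ (A x)) := hcov (fun u => H (τ u))
    _ = ∫ x in s, f x * H x := by
        apply setIntegral_congr_fun hsmeas
        intro x hx
        have hx' := hs_sub hx
        have h2 : τ (A x) = x := hτ x ⟨hx'.1.le, hx'.2.le⟩
        show |f x| • H (τ (A x)) = f x * H x
        rw [h2, smul_eq_mul, abs_of_pos (hfpos x)]
    _ = ∫ x in Set.Ioo (0:ℝ) 1, f x * H x := setIntegral_congr_set hs_eq
    _ = ∫ x in Set.Ioc (0:ℝ) 1, f x * H x := integral_Ioc_eq_integral_Ioo.symm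
    _ = ∫ s in (0:ℝ)..1, f s * H s := (intervalIntegral.integral_of_le zero_le_one).symm

/-- Reciprocal relation between the specific relative entropy `h(W‖Q)` (expressed via the
time-change of `X` by its quadratic variation) and the reciprocal specific relative entropy
`𝔥(Q‖W)`, for `Q` the law of `dX = σ(X) dB` with quadratic variation `A` and inverse
time-change `τ`, under the assumption `⟨X⟩₁ = 1` a.s. -/
theorem stmt_5 {Ω : Type*} [MeasurableSpace Ω] (Q : Measure Ω) [IsProbabilityMeasure Q]
    (σ : ℝ → ℝ) (X A τ : ℝ → Ω → ℝ)
    (hA : ∀ ω t, A t ω = ∫ s in (0:ℝ)..t, (σ (X s ω)) ^ 2)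
    (hσpos : ∀ s, ∀ ω, 0 < σ (X s ω))
    (hτA : ∀ ω, ∀ t ∈ Set.Icc (0:ℝ) 1, A (τ t ω) ω = t)
    (hAτ : ∀ ω, ∀ s ∈ Set.Icc (0:ℝ) 1, τ (A s ω) ω = s)
    (hA1 : ∀ᵐ ω ∂Q, A 1 ω = 1) :
    (1/2) * ∫ ω, (∫ t in (0:ℝ)..1,
        (1 / (σ (X (τ t ω) ω)) ^ 2 - Real.log (1 / (σ (X (τ t ω) ω)) ^ 2) - 1)) ∂Q
      = (1/2) * ∫ ω, (∫ t in (0:ℝ)..1,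
        ((σ (X t ω)) ^ 2 * Real.log ((σ (X t ω)) ^ 2) + 1 - (σ (X t ω)) ^ 2)) ∂Q := by
  have hcongr : ∀ᵐ ω ∂Q, (∫ t in (0:ℝ)..1,
        (1 / (σ (X (τ t ω) ω)) ^ 2 - Real.log (1 / (σ (X (τ t ω) ω)) ^ 2) - 1))
      = (∫ t in (0:ℝ)..1,
        ((σ (X t ω)) ^ 2 * Real.log ((σ (X t ω)) ^ 2) + 1 - (σ (X t ω)) ^ 2)) := by
    filter_upwards [hA1] with ω hA1ω
    set f : ℝ → ℝ := fun s => (σ (X s ω)) ^ 2 with hf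
    have hfpos : ∀ s, 0 < f s := fun s => pow_pos (hσpos s ω) 2
    have hfi : IntervalIntegrable f volume 0 1 := by
      by_contra hcon
      rw [hA ω 1, intervalIntegral.integral_undef hcon] at hA1ω
      exact zero_ne_one hA1ω
    have h01 : (∫ s in (0:ℝ)..1, f s) = 1 := by rw [← hA ω 1]; exact hA1ω
    have hτ' : ∀ s ∈ Set.Icc (0:ℝ) 1, (fun t => τ t ω) (∫ u in (0:ℝ)..s, f u) = s := by
      intro s hs
      have h := hAτ ω s hs
      rw [hA ω s] at h
      exact h
    have key := cov_aux (f := f) (τ := fun t => τ t ω)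
      (fun u => 1 / f u - Real.log (1 / f u) - 1) hfpos hfi h01 hτ'
    rw [show (∫ t in (0:ℝ)..1,
        (1 / (σ (X (τ t ω) ω)) ^ 2 - Real.log (1 / (σ (X (τ t ω) ω)) ^ 2) - 1))
        = ∫ t in (0:ℝ)..1, (fun u => 1 / f u - Real.log (1 / f u) - 1) ((fun t => τ t ω) t)
        from rfl, key]
    apply intervalIntegral.integral_congr
    intro u _
    have hfu := hfpos u
    have hne : f u ≠ 0 := hfu.ne'
    show f u * (1 / f u - Real.log (1 / f u) - 1)
        = f u * Real.log (f u) + 1 - f u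
    rw [one_div, Real.log_inv]
    field_simp
    ring
  rw [integral_congr_ae hcongr]
end

section
/- The function f(x) = −( (1/4)x² log(x²) + (1/4)(1−x)² log((1−x)²) + x(1−x) ) on (0,1) satisfies the ODE x(1−x) = exp(−f''(x) − 1), together with the boundary conditions f(0) = f(1) = 0 (interpreted as limits). -/
open Real Set Filter

private noncomputable def g6 (x : ℝ) : ℝ :=
  -((1/2) * x * Real.log (x ^ 2) - (1/2) * (1 - x) * Real.log ((1 - x) ^ 2) + (1/2 - x))

private lemma hasDerivAt_f6 (x : ℝ) (hx0 : x ≠ 0) (hx1 : x ≠ 1) :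
    HasDerivAt (fun x : ℝ => -((1/4) * x ^ 2 * Real.log (x ^ 2)
        + (1/4) * (1 - x) ^ 2 * Real.log ((1 - x) ^ 2) + x * (1 - x))) (g6 x) x := by
  have hu : HasDerivAt (fun x : ℝ => 1 - x) (-1) x := by
    simpa using (hasDerivAt_id x).const_sub 1
  have hx2 : (x : ℝ) ^ 2 ≠ 0 := pow_ne_zero _ hx0
  have hy : (1 : ℝ) - x ≠ 0 := sub_ne_zero.mpr (Ne.symm hx1)
  have hy2 : ((1 : ℝ) - x) ^ 2 ≠ 0 := pow_ne_zero _ hy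
  have hlog1 : HasDerivAt (fun x : ℝ => Real.log (x ^ 2)) ((2 * x ^ 1) / x ^ 2) x :=
    (hasDerivAt_pow 2 x).log hx2
  have hpow2 : HasDerivAt (fun x : ℝ => (1 - x) ^ 2) (2 * (1 - x) ^ 1 * (-1)) x := hu.pow 2
  have hlog2 : HasDerivAt (fun x : ℝ => Real.log ((1 - x) ^ 2))
      ((2 * (1 - x) ^ 1 * (-1)) / (1 - x) ^ 2) x :=
    hpow2.log hy2
  have hA : HasDerivAt (fun x : ℝ => (1/4) * x ^ 2 * Real.log (x ^ 2))
      ((1/4 * (2 * x ^ 1)) * Real.log (x ^ 2) + (1/4) * x ^ 2 * ((2 * x ^ 1) / x ^ 2)) x :=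
    ((hasDerivAt_pow 2 x).const_mul (1/4)).mul hlog1
  have hB : HasDerivAt (fun x : ℝ => (1/4) * (1 - x) ^ 2 * Real.log ((1 - x) ^ 2))
      ((1/4 * (2 * (1 - x) ^ 1 * (-1))) * Real.log ((1 - x) ^ 2)
        + (1/4) * (1 - x) ^ 2 * ((2 * (1 - x) ^ 1 * (-1)) / (1 - x) ^ 2)) x :=
    (hpow2.const_mul (1/4)).mul hlog2
  have hC : HasDerivAt (fun x : ℝ => x * (1 - x)) (1 * (1 - x) + x * (-1)) x :=
    (hasDerivAt_id x).mul hu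
  have := ((hA.add hB).add hC).neg
  refine this.congr_deriv ?_
  unfold g6
  field_simp
  ring

private lemma hasDerivAt_g6 (x : ℝ) (hx0 : x ≠ 0) (hx1 : x ≠ 1) :
    HasDerivAt g6 (-((1/2) * Real.log (x ^ 2) + (1/2) * Real.log ((1 - x) ^ 2) + 1)) x := by
  have hu : HasDerivAt (fun x : ℝ => 1 - x) (-1) x := by
    simpa using (hasDerivAt_id x).const_sub 1
  have hx2 : (x : ℝ) ^ 2 ≠ 0 := pow_ne_zero _ hx0
  have hy : (1 : ℝ) - x ≠ 0 := sub_ne_zero.mpr (Ne.symm hx1)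
  have hy2 : ((1 : ℝ) - x) ^ 2 ≠ 0 := pow_ne_zero _ hy
  have hlog1 : HasDerivAt (fun x : ℝ => Real.log (x ^ 2)) ((2 * x ^ 1) / x ^ 2) x :=
    (hasDerivAt_pow 2 x).log hx2
  have hpow2 : HasDerivAt (fun x : ℝ => (1 - x) ^ 2) (2 * (1 - x) ^ 1 * (-1)) x := hu.pow 2
  have hlog2 : HasDerivAt (fun x : ℝ => Real.log ((1 - x) ^ 2))
      ((2 * (1 - x) ^ 1 * (-1)) / (1 - x) ^ 2) x :=
    hpow2.log hy2
  have hA : HasDerivAt (fun x : ℝ => (1/2) * x * Real.log (x ^ 2))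
      ((1/2 * 1) * Real.log (x ^ 2) + (1/2) * x * ((2 * x ^ 1) / x ^ 2)) x :=
    ((hasDerivAt_id x).const_mul (1/2)).mul hlog1
  have hB : HasDerivAt (fun x : ℝ => (1/2) * (1 - x) * Real.log ((1 - x) ^ 2))
      ((1/2 * (-1)) * Real.log ((1 - x) ^ 2)
        + (1/2) * (1 - x) * ((2 * (1 - x) ^ 1 * (-1)) / (1 - x) ^ 2)) x :=
    (hu.const_mul (1/2)).mul hlog2
  have hC : HasDerivAt (fun x : ℝ => 1/2 - x) (-1) x := by
    simpa using (hasDerivAt_id x).const_sub (1/2 : ℝ)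
  have := ((hA.sub hB).add hC).neg
  refine this.congr_deriv ?_
  field_simp
  ring

theorem stmt_6 (f : ℝ → ℝ)
    (hf : ∀ x, f x = -((1/4) * x ^ 2 * Real.log (x ^ 2)
        + (1/4) * (1 - x) ^ 2 * Real.log ((1 - x) ^ 2) + x * (1 - x))) :
    (∀ x ∈ Set.Ioo (0:ℝ) 1, x * (1 - x) = Real.exp (-(deriv (deriv f) x) - 1)) ∧
    Filter.Tendsto f (nhdsWithin 0 (Set.Ioo (0:ℝ) 1)) (nhds 0) ∧
    Filter.Tendsto f (nhdsWithin 1 (Set.Ioo (0:ℝ) 1)) (nhds 0) := by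
  have hfe : f = fun x : ℝ => -((1/4) * x ^ 2 * Real.log (x ^ 2)
        + (1/4) * (1 - x) ^ 2 * Real.log ((1 - x) ^ 2) + x * (1 - x)) := funext hf
  refine ⟨?_, ?_, ?_⟩
  · intro x hx
    obtain ⟨hx0, hx1⟩ := hx
    have hy : (0 : ℝ) < 1 - x := by linarith
    have heq : deriv f =ᶠ[nhds x] g6 := by
      filter_upwards [isOpen_Ioo.mem_nhds (show x ∈ Ioo (0:ℝ) 1 from ⟨hx0, hx1⟩)] with y hy
      rw [hfe]
      exact (hasDerivAt_f6 y (ne_of_gt hy.1) (ne_of_lt hy.2)).deriv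
    have h2 : deriv (deriv f) x = -((1/2) * Real.log (x ^ 2) + (1/2) * Real.log ((1 - x) ^ 2) + 1) := by
      rw [heq.deriv_eq]
      exact (hasDerivAt_g6 x (ne_of_gt hx0) (ne_of_lt hx1)).deriv
    rw [h2]
    have hlx : Real.log (x ^ 2) = 2 * Real.log x := by
      rw [Real.log_pow]; push_cast; ring
    have hly : Real.log ((1 - x) ^ 2) = 2 * Real.log (1 - x) := by
      rw [Real.log_pow]; push_cast; ring
    have : -(-((1/2) * Real.log (x ^ 2) + (1/2) * Real.log ((1 - x) ^ 2) + 1)) - 1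
        = Real.log (x * (1 - x)) := by
      rw [Real.log_mul (ne_of_gt hx0) (ne_of_gt hy), hlx, hly]; ring
    rw [this, Real.exp_log (mul_pos hx0 hy)]
  all_goals
    have hc : Continuous f := by
      rw [hfe]
      have h1 : Continuous fun x : ℝ => x ^ 2 * Real.log (x ^ 2) :=
        Real.continuous_mul_log.comp (continuous_pow 2)
      have h2 : Continuous fun x : ℝ => (1 - x) ^ 2 * Real.log ((1 - x) ^ 2) :=
        h1.comp (continuous_const.sub continuous_id)
      have h3 : Continuous fun x : ℝ => x * (1 - x) :=
        continuous_id.mul (continuous_const.sub continuous_id)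
      have h4 : Continuous fun x : ℝ => -((1/4 : ℝ) * (x ^ 2 * Real.log (x ^ 2))
          + (1/4 : ℝ) * ((1 - x) ^ 2 * Real.log ((1 - x) ^ 2)) + x * (1 - x)) :=
        (((continuous_const.mul h1).add (continuous_const.mul h2)).add h3).neg
      exact h4.congr fun x => by ring
  · have h0 : f 0 = 0 := by rw [hf 0]; norm_num
    have := (hc.tendsto 0).mono_left (nhdsWithin_le_nhds (s := Ioo (0:ℝ) 1))
    rwa [h0] at this
  · have h0 : f 1 = 0 := by rw [hf 1]; norm_num
    have := (hc.tendsto 1).mono_left (nhdsWithin_le_nhds (s := Ioo (0:ℝ) 1))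
    rwa [h0] at this
end

section
/- The function v̄(t,x) = −( (1/4)x² log(x²) + (1/4)(1−x)² log((1−x)²) + x(1−x) ) − (1/2)·log(1−t)·x(1−x), defined for (t,x) ∈ [0,1)×(0,1), is a classical solution of the PDE ∂_t v(t,x) = (1/2)·exp(−∂_x² v(t,x) − 1), with v̄(t,0) = v̄(t,1) = 0 and v̄(t,x) → +∞ as t → 1 for fixed x ∈ (0,1). -/
open Real Filter Set

/-- First spatial derivative of the value function. -/
private lemma hasDerivAt_V (t y : ℝ) (hy0 : y ≠ 0) (hy1 : (1:ℝ) - y ≠ 0) :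
    HasDerivAt (fun z : ℝ => -((1/4) * z ^ 2 * Real.log (z ^ 2)
        + (1/4) * (1 - z) ^ 2 * Real.log ((1 - z) ^ 2) + z * (1 - z))
        - (1/2) * Real.log (1 - t) * (z * (1 - z)))
      (-((1/2) * y * Real.log (y ^ 2) + (1/2) * y
        - ((1/2) * (1 - y) * Real.log ((1 - y) ^ 2) + (1/2) * (1 - y)) + (1 - 2*y))
        - (1/2) * Real.log (1 - t) * (1 - 2*y)) y := by
  have hy2 : y ^ 2 ≠ 0 := pow_ne_zero 2 hy0
  have hy12 : ((1:ℝ) - y) ^ 2 ≠ 0 := pow_ne_zero 2 hy1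
  have h1 : HasDerivAt (fun z : ℝ => z ^ 2) (2 * y) y := by
    simpa using hasDerivAt_pow 2 y
  have h2 : HasDerivAt (fun z : ℝ => 1 - z) (-1) y := by
    simpa using (hasDerivAt_id y).const_sub (1:ℝ)
  have h2p : HasDerivAt (fun z : ℝ => (1 - z) ^ 2) (2 * (1 - y) * (-1)) y := by
    have := h2.fun_pow 2
    simpa using this
  have hlog1 : HasDerivAt (fun z : ℝ => Real.log (z ^ 2)) ((2 * y) / y ^ 2) y :=
    h1.log hy2
  have hlog2 : HasDerivAt (fun z : ℝ => Real.log ((1 - z) ^ 2))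
      ((2 * (1 - y) * (-1)) / (1 - y) ^ 2) y := h2p.log hy12
  have hA : HasDerivAt (fun z : ℝ => (1/4) * z ^ 2 * Real.log (z ^ 2))
      ((1/4) * (2 * y) * Real.log (y ^ 2) + (1/4) * y ^ 2 * ((2 * y) / y ^ 2)) y :=
    (h1.const_mul (1/4 : ℝ)).mul hlog1
  have hB : HasDerivAt (fun z : ℝ => (1/4) * (1 - z) ^ 2 * Real.log ((1 - z) ^ 2))
      ((1/4) * (2 * (1 - y) * (-1)) * Real.log ((1 - y) ^ 2)
        + (1/4) * (1 - y) ^ 2 * ((2 * (1 - y) * (-1)) / (1 - y) ^ 2)) y :=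
    (h2p.const_mul (1/4 : ℝ)).mul hlog2
  have hC : HasDerivAt (fun z : ℝ => z * (1 - z)) (1 * (1 - y) + y * (-1)) y :=
    (hasDerivAt_id y).mul h2
  have hraw := (((hA.fun_add hB).fun_add hC).fun_neg).fun_sub
    (hC.const_mul ((1/2) * Real.log (1 - t)))
  refine hraw.congr_deriv ?_
  field_simp
  ring

/-- Second spatial derivative of the value function. -/
private lemma hasDerivAt_V' (t y : ℝ) (hy0 : y ≠ 0) (hy1 : (1:ℝ) - y ≠ 0) :
    HasDerivAt (fun z : ℝ =>
      -((1/2) * z * Real.log (z ^ 2) + (1/2) * z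
        - ((1/2) * (1 - z) * Real.log ((1 - z) ^ 2) + (1/2) * (1 - z)) + (1 - 2*z))
        - (1/2) * Real.log (1 - t) * (1 - 2*z))
      (-((1/2) * Real.log (y ^ 2) + (1/2) * Real.log ((1 - y) ^ 2) + 1)
        + Real.log (1 - t)) y := by
  have hy2 : y ^ 2 ≠ 0 := pow_ne_zero 2 hy0
  have hy12 : ((1:ℝ) - y) ^ 2 ≠ 0 := pow_ne_zero 2 hy1
  have h1 : HasDerivAt (fun z : ℝ => z ^ 2) (2 * y) y := by
    simpa using hasDerivAt_pow 2 y
  have h2 : HasDerivAt (fun z : ℝ => 1 - z) (-1) y := by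
    simpa using (hasDerivAt_id y).const_sub (1:ℝ)
  have h2p : HasDerivAt (fun z : ℝ => (1 - z) ^ 2) (2 * (1 - y) * (-1)) y := by
    have := h2.fun_pow 2
    simpa using this
  have hlog1 : HasDerivAt (fun z : ℝ => Real.log (z ^ 2)) ((2 * y) / y ^ 2) y :=
    h1.log hy2
  have hlog2 : HasDerivAt (fun z : ℝ => Real.log ((1 - z) ^ 2))
      ((2 * (1 - y) * (-1)) / (1 - y) ^ 2) y := h2p.log hy12
  have hA : HasDerivAt (fun z : ℝ => (1/2) * z * Real.log (z ^ 2))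
      ((1/2) * 1 * Real.log (y ^ 2) + (1/2) * y * ((2 * y) / y ^ 2)) y :=
    ((hasDerivAt_id y).const_mul (1/2 : ℝ)).mul hlog1
  have hB : HasDerivAt (fun z : ℝ => (1/2) * z) ((1/2) * 1) y :=
    (hasDerivAt_id y).const_mul (1/2 : ℝ)
  have hCmul : HasDerivAt (fun z : ℝ => (1/2) * (1 - z) * Real.log ((1 - z) ^ 2))
      ((1/2) * (-1) * Real.log ((1 - y) ^ 2)
        + (1/2) * (1 - y) * ((2 * (1 - y) * (-1)) / (1 - y) ^ 2)) y :=
    (h2.const_mul (1/2 : ℝ)).mul hlog2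
  have hD : HasDerivAt (fun z : ℝ => (1/2) * (1 - z)) ((1/2) * (-1)) y :=
    h2.const_mul (1/2 : ℝ)
  have hE : HasDerivAt (fun z : ℝ => (1:ℝ) - 2*z) (-(2:ℝ)) y := by
    simpa using ((hasDerivAt_id y).const_mul (2:ℝ)).const_sub (1:ℝ)
  have hraw := ((((hA.fun_add hB).fun_sub (hCmul.fun_add hD)).fun_add hE).fun_neg).fun_sub
    (hE.const_mul ((1/2) * Real.log (1 - t)))
  refine hraw.congr_deriv ?_
  field_simp
  ring

theorem stmt_7 (v : ℝ → ℝ → ℝ)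
    (hv : ∀ t x, v t x = -((1/4) * x ^ 2 * Real.log (x ^ 2)
        + (1/4) * (1 - x) ^ 2 * Real.log ((1 - x) ^ 2) + x * (1 - x))
        - (1/2) * Real.log (1 - t) * (x * (1 - x))) :
    (∀ t ∈ Set.Ico (0:ℝ) 1, ∀ x ∈ Set.Ioo (0:ℝ) 1,
      deriv (fun s => v s x) t
        = (1/2) * Real.exp (-(deriv (deriv (v t)) x) - 1)) ∧
    (∀ t ∈ Set.Ico (0:ℝ) 1, v t 0 = 0 ∧ v t 1 = 0) ∧
    (∀ x ∈ Set.Ioo (0:ℝ) 1,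
      Filter.Tendsto (fun t => v t x) (nhdsWithin 1 (Set.Iio (1:ℝ))) Filter.atTop) := by
  refine ⟨?_, ?_, ?_⟩
  · rintro t ⟨ht0, ht1⟩ x ⟨hx0, hx1⟩
    have h1tpos : (0:ℝ) < 1 - t := sub_pos.mpr ht1
    have h1t : (1:ℝ) - t ≠ 0 := ne_of_gt h1tpos
    have hx1' : (0:ℝ) < 1 - x := sub_pos.mpr hx1
    -- time derivative
    have htime : deriv (fun s => v s x) t = x * (1 - x) / (2 * (1 - t)) := by
      have hfun : (fun s => v s x) = fun s =>
          -((1/4) * x ^ 2 * Real.log (x ^ 2)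
            + (1/4) * (1 - x) ^ 2 * Real.log ((1 - x) ^ 2) + x * (1 - x))
          - (1/2) * Real.log (1 - s) * (x * (1 - x)) := by
        funext s; exact hv s x
      rw [hfun]
      have hln : HasDerivAt (fun s : ℝ => Real.log (1 - s)) ((-1) / (1 - t)) t := by
        have h2 : HasDerivAt (fun s : ℝ => 1 - s) (-1) t := by
          simpa using (hasDerivAt_id t).const_sub (1:ℝ)
        exact h2.log h1t
      have hmul : HasDerivAt (fun s : ℝ =>
          (1/2) * Real.log (1 - s) * (x * (1 - x)))
          ((1/2) * ((-1) / (1 - t)) * (x * (1 - x))) t :=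
        (hln.const_mul (1/2 : ℝ)).mul_const (x * (1 - x))
      have hfull := hmul.const_sub (-((1/4) * x ^ 2 * Real.log (x ^ 2)
            + (1/4) * (1 - x) ^ 2 * Real.log ((1 - x) ^ 2) + x * (1 - x)))
      rw [hfull.deriv]
      field_simp
    -- space derivatives
    have hvt : v t = fun z : ℝ => -((1/4) * z ^ 2 * Real.log (z ^ 2)
        + (1/4) * (1 - z) ^ 2 * Real.log ((1 - z) ^ 2) + z * (1 - z))
        - (1/2) * Real.log (1 - t) * (z * (1 - z)) := funext (hv t)
    have hEq : Set.EqOn (deriv (v t)) (fun y : ℝ =>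
        -((1/2) * y * Real.log (y ^ 2) + (1/2) * y
          - ((1/2) * (1 - y) * Real.log ((1 - y) ^ 2) + (1/2) * (1 - y)) + (1 - 2*y))
          - (1/2) * Real.log (1 - t) * (1 - 2*y)) (Set.Ioo 0 1) := by
      intro y hy
      rw [hvt]
      exact (hasDerivAt_V t y (ne_of_gt hy.1) (ne_of_gt (sub_pos.mpr hy.2))).deriv
    have hmemnhds : Set.Ioo (0:ℝ) 1 ∈ nhds x := Ioo_mem_nhds hx0 hx1
    have hEv : deriv (v t) =ᶠ[nhds x] (fun y : ℝ =>
        -((1/2) * y * Real.log (y ^ 2) + (1/2) * y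
          - ((1/2) * (1 - y) * Real.log ((1 - y) ^ 2) + (1/2) * (1 - y)) + (1 - 2*y))
          - (1/2) * Real.log (1 - t) * (1 - 2*y)) := by
      filter_upwards [hmemnhds] with y hy using hEq hy
    have hd2 : deriv (deriv (v t)) x
        = -((1/2) * Real.log (x ^ 2) + (1/2) * Real.log ((1 - x) ^ 2) + 1)
          + Real.log (1 - t) := by
      rw [hEv.deriv_eq]
      exact (hasDerivAt_V' t x (ne_of_gt hx0) (ne_of_gt hx1')).deriv
    rw [htime, hd2]
    have hlx : Real.log (x ^ 2) = 2 * Real.log x := by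
      rw [Real.log_pow]; push_cast; ring
    have hlx1 : Real.log ((1 - x) ^ 2) = 2 * Real.log (1 - x) := by
      rw [Real.log_pow]; push_cast; ring
    have : -(-((1/2) * Real.log (x ^ 2) + (1/2) * Real.log ((1 - x) ^ 2) + 1)
          + Real.log (1 - t)) - 1
        = Real.log x + Real.log (1 - x) - Real.log (1 - t) := by
      rw [hlx, hlx1]; ring
    rw [this, Real.exp_sub, Real.exp_add, Real.exp_log hx0, Real.exp_log hx1',
      Real.exp_log h1tpos]
    field_simp
  · rintro t ⟨ht0, ht1⟩
    constructor <;> simp [hv, Real.log_one]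
  · rintro x ⟨hx0, hx1⟩
    have hx1' : (0:ℝ) < 1 - x := sub_pos.mpr hx1
    have hc : (0:ℝ) < (1/2) * (x * (1 - x)) := by positivity
    have hmap : Tendsto (fun t : ℝ => 1 - t) (nhdsWithin 1 (Set.Iio 1)) (nhdsWithin 0 (Set.Ioi 0)) := by
      apply tendsto_nhdsWithin_of_tendsto_nhds_of_eventually_within
      · have : Tendsto (fun t : ℝ => 1 - t) (nhds 1) (nhds 0) := by
          have := (tendsto_const_nhds (x := (1:ℝ)) (f := nhds (1:ℝ))).sub tendsto_id
          simpa using this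
        exact this.mono_left nhdsWithin_le_nhds
      · filter_upwards [self_mem_nhdsWithin] with t ht
        exact Set.mem_Ioi.mpr (sub_pos.mpr (Set.mem_Iio.mp ht))
    have hL : Tendsto (fun t : ℝ => Real.log (1 - t)) (nhdsWithin 1 (Set.Iio 1)) atBot :=
      Real.tendsto_log_nhdsGT_zero.comp hmap
    have hNeg : Tendsto (fun t : ℝ => -Real.log (1 - t)) (nhdsWithin 1 (Set.Iio 1)) atTop :=
      tendsto_neg_atBot_atTop.comp hL
    have hMul : Tendsto (fun t : ℝ => (1/2) * (x * (1 - x)) * (-Real.log (1 - t)))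
        (nhdsWithin 1 (Set.Iio 1)) atTop := hNeg.const_mul_atTop hc
    have hAdd := tendsto_atTop_add_const_right (nhdsWithin 1 (Set.Iio 1))
      (-((1/4) * x ^ 2 * Real.log (x ^ 2)
        + (1/4) * (1 - x) ^ 2 * Real.log ((1 - x) ^ 2) + x * (1 - x))) hMul
    refine hAdd.congr fun t => ?_
    rw [hv t x]
    ring
end

section
/- Let M be the scaled neutral Wright–Fisher diffusion dM_s = √(M_s(1−M_s)/(1−s)) dB_s on [t,1) with M_t = x ∈ [0,1]. Then the process Σ_s := M_s(1−M_s)/(1−s) is a martingale on [t,1); in particular E[Σ_u] = x(1−x)/(1−t) for all u ∈ [t,1). -/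
open MeasureTheory

/-- For the scaled neutral Wright–Fisher diffusion `dM_s = √(M_s(1−M_s)/(1−s)) dB_s` on `[t,1)`
with `M_t = x` (encoded through its martingale problem: for every `C²` function `f`, the process
`f(M_s) − (1/2)∫ Σ_u f''(M_u) du` is a martingale, where `Σ_u = M_u(1−M_u)/(1−u)`), the process
`Σ_s = M_s(1−M_s)/(1−s)` is a martingale on `[t,1)`; in particular
`E[Σ_u] = x(1−x)/(1−t)` for `u ∈ [t,1)`. -/
theorem stmt_10 {Ω : Type*} {m0 : MeasurableSpace Ω} (ℱ : Filtration ℝ m0)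
    (P : Measure Ω) [IsProbabilityMeasure P] (M : ℝ → Ω → ℝ) (t x : ℝ)
    (ht : t ∈ Set.Ico (0:ℝ) 1) (hx : x ∈ Set.Icc (0:ℝ) 1)
    (hMt : ∀ ω, M t ω = x)
    (hrange : ∀ s ω, M s ω ∈ Set.Icc (0:ℝ) 1)
    (hadapted : Adapted ℱ M)
    (hcont : ∀ ω, Continuous fun s => M s ω)
    (hMP : ∀ f : ℝ → ℝ, ContDiff ℝ 2 f → ∀ u v, t ≤ u → u ≤ v → v < 1 →
      P[(fun ω => f (M v ω)
          - (1/2) * ∫ r in u..v, (M r ω * (1 - M r ω) / (1 - r)) * deriv (deriv f) (M r ω))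
        | ℱ u] =ᵐ[P] fun ω => f (M u ω)) :
    (∀ u v, t ≤ u → u ≤ v → v < 1 →
      P[(fun ω => M v ω * (1 - M v ω) / (1 - v)) | ℱ u]
        =ᵐ[P] fun ω => M u ω * (1 - M u ω) / (1 - u)) ∧
    (∀ u, t ≤ u → u < 1 →
      ∫ ω, M u ω * (1 - M u ω) / (1 - u) ∂P = x * (1 - x) / (1 - t)) := by
  have hMmeas : ∀ s, Measurable (M s) := fun s =>
    (hadapted s).mono (ℱ.le s) le_rfl
  have hGmeas : ∀ s, Measurable (fun ω => M s ω * (1 - M s ω)) := fun s =>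
    (hMmeas s).mul (measurable_const.sub (hMmeas s))
  have hUnc : Measurable (Function.uncurry M) :=
    measurable_uncurry_of_continuous_of_measurable hcont hMmeas
  have hGunc : Measurable (fun p : ℝ × Ω => M p.1 p.2 * (1 - M p.1 p.2)) :=
    hUnc.mul (measurable_const.sub hUnc)
  have hG01 : ∀ s ω, M s ω * (1 - M s ω) ∈ Set.Icc (0:ℝ) 1 := by
    intro s ω
    obtain ⟨h0, h1⟩ := hrange s ω
    exact ⟨mul_nonneg h0 (by linarith), by nlinarith⟩
  have hGabs : ∀ s ω, |M s ω * (1 - M s ω)| ≤ 1 := by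
    intro s ω
    rcases hG01 s ω with ⟨h0, h1⟩
    rw [abs_of_nonneg h0]; exact h1
  have hGint : ∀ s, Integrable (fun ω => M s ω * (1 - M s ω)) P := by
    intro s
    refine (integrable_const (1:ℝ)).mono' (hGmeas s).aestronglyMeasurable ?_
    exact Filter.Eventually.of_forall fun ω =>
      (by rw [Real.norm_eq_abs]; exact hGabs s ω)
  have hSigint : ∀ s, Integrable (fun ω => M s ω * (1 - M s ω) / (1 - s)) P := by
    intro s
    simpa [div_eq_mul_inv] using (hGint s).mul_const (1 - s)⁻¹
  have main : ∀ u v, t ≤ u → u ≤ v → v < 1 →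
      P[(fun ω => M v ω * (1 - M v ω) / (1 - v)) | ℱ u]
        =ᵐ[P] fun ω => M u ω * (1 - M u ω) / (1 - u) := by
    intro u v hu huv hv
    have hu1 : u < 1 := lt_of_le_of_lt huv hv
    -- set-integral equality on ℱ u-measurable sets
    have key : ∀ A, MeasurableSet[ℱ u] A →
        ∫ ω in A, M u ω * (1 - M u ω) / (1 - u) ∂P
          = ∫ ω in A, M v ω * (1 - M v ω) / (1 - v) ∂P := by
      intro A hA
      have hA' : MeasurableSet A := ℱ.le u A hA
      set f : ℝ → ℝ := fun y => y * (1 - y) with hf_def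
      have hf2 : ContDiff ℝ 2 f := contDiff_id.mul (contDiff_const.sub contDiff_id)
      have hderiv1 : deriv f = fun y => 1 - 2 * y := by
        funext y
        have H : HasDerivAt f (1 * (1 - y) + y * (0 - 1)) y :=
          (hasDerivAt_id y).mul ((hasDerivAt_const y (1:ℝ)).sub (hasDerivAt_id y))
        rw [H.deriv]; ring
      have hderiv2 : ∀ y : ℝ, deriv (deriv f) y = -2 := by
        intro y
        rw [hderiv1]
        have H : HasDerivAt (fun y : ℝ => 1 - 2 * y) (-2) y := by
          simpa using ((hasDerivAt_id y).const_mul (2:ℝ)).const_sub (1:ℝ)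
        exact H.deriv
      set h : ℝ → ℝ := fun r => ∫ ω in A, M r ω * (1 - M r ω) ∂P with hh_def
      have hhcont : Continuous h := by
        refine continuous_of_dominated (bound := fun _ => (1:ℝ))
          (fun r => ((hGmeas r).aestronglyMeasurable).restrict) ?_ (integrable_const 1) ?_
        · exact fun r => Filter.Eventually.of_forall fun ω =>
            (by rw [Real.norm_eq_abs]; exact hGabs r ω)
        · exact Filter.Eventually.of_forall fun ω =>
            (hcont ω).mul (continuous_const.sub (hcont ω))
      have hhmeas : Measurable h := hhcont.measurable
      set φ : ℝ → ℝ := fun r => h r / (1 - r) with hφ_def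
      have hφmeas : Measurable φ := hhmeas.div (measurable_const.sub measurable_id)
      have hφcont : ∀ b : ℝ, b < 1 → ContinuousAt φ b := by
        intro b hb
        exact (hhcont.continuousAt).div
          ((continuous_const.sub continuous_id).continuousAt)
          (sub_ne_zero.mpr hb.ne')
      have hASig : ∀ w : ℝ, ∫ ω in A, M w ω * (1 - M w ω) / (1 - w) ∂P = h w * (1 - w)⁻¹ := by
        intro w
        simp_rw [div_eq_mul_inv]
        rw [integral_mul_const]
      -- the fundamental integral equation
      have heq : ∀ b, u ≤ b → b < 1 → h b = h u - ∫ r in u..b, φ r := by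
        intro b hub hb1
        have hMPb := hMP f hf2 u b hu hub hb1
        have hFsimp : (fun ω => f (M b ω)
            - (1/2) * ∫ r in u..b, (M r ω * (1 - M r ω) / (1 - r)) * deriv (deriv f) (M r ω))
            = fun ω => M b ω * (1 - M b ω)
                + ∫ r in u..b, M r ω * (1 - M r ω) / (1 - r) := by
          funext ω
          simp_rw [hderiv2]
          simp only [hf_def]
          rw [intervalIntegral.integral_mul_const]
          ring
        -- measurability of the time-integral term
        have hswap : Measurable (Function.uncurry
            (fun ω r => M r ω * (1 - M r ω) / (1 - r))) := by
          have : (Function.uncurry (fun ω r => M r ω * (1 - M r ω) / (1 - r)))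
              = (fun p : ℝ × Ω => M p.1 p.2 * (1 - M p.1 p.2) / (1 - p.1)) ∘ Prod.swap := rfl
          rw [this]
          exact (hGunc.div (measurable_const.sub measurable_fst)).comp measurable_swap
        have hImeas : Measurable (fun ω => ∫ r in u..b,
            M r ω * (1 - M r ω) / (1 - r)) := by
          have e0 : ∀ ω, (∫ r in u..b, M r ω * (1 - M r ω) / (1 - r))
              = ∫ r in Set.Ioc u b, M r ω * (1 - M r ω) / (1 - r) := fun ω =>
            intervalIntegral.integral_of_le hub
          simp_rw [e0]
          exact (hswap.stronglyMeasurable.integral_prod_right).measurable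
        have hSigbound : ∀ ω, ∀ r ∈ Set.uIoc u b,
            ‖M r ω * (1 - M r ω) / (1 - r)‖ ≤ (1 - b)⁻¹ := by
          intro ω r hr
          rw [Set.uIoc_of_le hub] at hr
          have hpos : 0 < 1 - r := by linarith [hr.2]
          have hb' : 0 < 1 - b := by linarith
          rw [Real.norm_eq_abs, abs_div, abs_of_pos hpos, inv_eq_one_div]
          exact div_le_div₀ zero_le_one (hGabs r ω) hb' (by linarith [hr.2])
        have hIbound : ∀ ω, ‖∫ r in u..b, M r ω * (1 - M r ω) / (1 - r)‖
            ≤ (1 - b)⁻¹ * |b - u| :=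
          fun ω => intervalIntegral.norm_integral_le_of_norm_le_const (hSigbound ω)
        have hIint : Integrable (fun ω => ∫ r in u..b,
            M r ω * (1 - M r ω) / (1 - r)) P :=
          (integrable_const ((1 - b)⁻¹ * |b - u|)).mono' hImeas.aestronglyMeasurable
            (Filter.Eventually.of_forall hIbound)
        have hFint : Integrable (fun ω => M b ω * (1 - M b ω)
            + ∫ r in u..b, M r ω * (1 - M r ω) / (1 - r)) P := (hGint b).add hIint
        have hFint' : Integrable (fun ω => f (M b ω)
            - (1/2) * ∫ r in u..b,
              (M r ω * (1 - M r ω) / (1 - r)) * deriv (deriv f) (M r ω)) P := by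
          rw [hFsimp]; exact hFint
        have e1 := setIntegral_condExp (ℱ.le u) hFint' hA
        have e2 : ∫ ω in A, (P[(fun ω => f (M b ω)
            - (1/2) * ∫ r in u..b,
              (M r ω * (1 - M r ω) / (1 - r)) * deriv (deriv f) (M r ω)) | ℱ u]) ω ∂P
            = h u := by
          rw [setIntegral_congr_ae hA' (hMPb.mono fun ω hω _ => hω)]
        -- Fubini for the time-integral term
        have hFub : ∫ ω in A, (∫ r in u..b, M r ω * (1 - M r ω) / (1 - r)) ∂P
            = ∫ r in u..b, φ r := by
          have e0 : ∀ ω, (∫ r in u..b, M r ω * (1 - M r ω) / (1 - r))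
              = ∫ r in Set.Ioc u b, M r ω * (1 - M r ω) / (1 - r) := fun ω =>
            intervalIntegral.integral_of_le hub
          simp_rw [e0]
          rw [intervalIntegral.integral_of_le hub]
          have hprodint : Integrable (Function.uncurry
              (fun ω r => M r ω * (1 - M r ω) / (1 - r)))
              ((P.restrict A).prod (volume.restrict (Set.Ioc u b))) := by
            refine (integrable_const ((1 - b)⁻¹)).mono'
              hswap.aestronglyMeasurable ?_
            rw [Measure.ae_prod_iff_ae_ae]
            · refine Filter.Eventually.of_forall fun ω => ?_
              filter_upwards [ae_restrict_mem measurableSet_Ioc] with r hr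
              exact hSigbound ω r (by rwa [Set.uIoc_of_le hub])
            · exact measurableSet_le (hswap.norm) measurable_const
          rw [integral_integral_swap hprodint]
          refine integral_congr_ae (Filter.Eventually.of_forall fun r => ?_)
          exact hASig r
        have e3 : ∫ ω in A, (M b ω * (1 - M b ω)
            + ∫ r in u..b, M r ω * (1 - M r ω) / (1 - r)) ∂P = h u := by
          rw [← hFsimp]
          exact e1.symm.trans e2
        rw [integral_add ((hGint b).integrableOn) (hIint.integrableOn), hFub] at e3
        have e4 : h b = ∫ ω in A, M b ω * (1 - M b ω) ∂P := rfl
        linarith [e3, e4]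
      -- the ODE argument
      set H : ℝ → ℝ := fun b => ∫ r in u..b, φ r with hH_def
      have hHder : ∀ b ∈ Set.Icc u v, HasDerivAt H (φ b) b := by
        intro b hb
        have hb1 : b < 1 := lt_of_le_of_lt hb.2 hv
        refine intervalIntegral.integral_hasDerivAt_right ?_ ?_ (hφcont b hb1)
        · refine ContinuousOn.intervalIntegrable fun r hr => ?_
          rw [Set.uIcc_of_le hb.1] at hr
          exact (hφcont r (lt_of_le_of_lt hr.2 hb1)).continuousWithinAt
        · exact hφmeas.stronglyMeasurable.stronglyMeasurableAtFilter
      set ψ : ℝ → ℝ := fun b => (h u - H b) * (1 - b)⁻¹ with hψ_def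
      have hψder : ∀ b ∈ Set.Icc u v, HasDerivAt ψ 0 b := by
        intro b hb
        have hb1 : b < 1 := lt_of_le_of_lt hb.2 hv
        have h1b : (1:ℝ) - b ≠ 0 := by linarith
        have d1 : HasDerivAt (fun b => h u - H b) (-φ b) b := (hHder b hb).const_sub (h u)
        have dlin : HasDerivAt (fun b : ℝ => 1 - b) (-1) b := by
          simpa using (hasDerivAt_id b).const_sub (1:ℝ)
        have d2 : HasDerivAt (fun b : ℝ => (1 - b)⁻¹) (1 / (1 - b) ^ 2) b := by
          have := dlin.inv h1b
          rw [show (1:ℝ) / (1 - b) ^ 2 = - -1 / (1 - b) ^ 2 by ring]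
          exact this
        have d3 := d1.mul d2
        have hval : h u - H b = h b := by
          rw [heq b hb.1 hb1]; try ring
        have : (-φ b) * (1 - b)⁻¹ + (h u - H b) * (1 / (1 - b) ^ 2) = 0 := by
          rw [hval, hφ_def]
          field_simp
          ring
        rwa [this] at d3
      have hψcont : ContinuousOn ψ (Set.Icc u v) := fun b hb =>
        ((hψder b hb).continuousAt).continuousWithinAt
      have hconst : ψ v = ψ u :=
        constant_of_has_deriv_right_zero hψcont
          (fun b hb => ((hψder b (Set.Ico_subset_Icc_self hb)).hasDerivWithinAt)) v
          (Set.right_mem_Icc.mpr huv)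
      have hψu : ψ u = h u * (1 - u)⁻¹ := by
        simp [hψ_def, hH_def, intervalIntegral.integral_same]
      have hψv : ψ v = h v * (1 - v)⁻¹ := by
        have hv' : h u - H v = h v := by rw [heq v huv hv]; try ring
        show (h u - H v) * (1 - v)⁻¹ = h v * (1 - v)⁻¹
        rw [hv']
      rw [hASig u, hASig v, ← hψu, ← hψv, hconst]
    have hms : AEStronglyMeasurable[ℱ u]
        (fun ω => M u ω * (1 - M u ω) / (1 - u)) P := by
      have e : (fun ω => M u ω * (1 - M u ω) / (1 - u))
          = fun ω => (M u ω * (1 - M u ω)) * (1 - u)⁻¹ := by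
        funext ω; rw [div_eq_mul_inv]
      rw [e]
      exact StronglyMeasurable.aestronglyMeasurable
        (((hadapted u).stronglyMeasurable.mul (stronglyMeasurable_const.sub (hadapted u).stronglyMeasurable)).mul
          stronglyMeasurable_const)
    exact (ae_eq_condExp_of_forall_setIntegral_eq (ℱ.le u) (hSigint v)
      (fun s _ _ => (hSigint u).integrableOn)
      (fun s hs _ => key s hs) hms).symm
  refine ⟨main, ?_⟩
  intro u hu hu1
  have h1 := main t u le_rfl hu hu1
  have e : ∫ ω, M u ω * (1 - M u ω) / (1 - u) ∂P
      = ∫ ω, (P[(fun ω => M u ω * (1 - M u ω) / (1 - u)) | ℱ t]) ω ∂P :=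
    (integral_condExp (ℱ.le t)).symm
  rw [e, integral_congr_ae h1]
  have : (fun ω => M t ω * (1 - M t ω) / (1 - t)) = fun _ => x * (1 - x) / (1 - t) := by
    funext ω; rw [hMt]
  rw [this, integral_const]
  simp
end

section
/- Let Q̄ be the law of the scaled neutral Wright–Fisher diffusion dM_t = √(M_t(1−M_t)/(1−t)) dB_t with M_0 = x₀ ∈ (0,1), and Σ_t = M_t(1−M_t)/(1−t). Then E_{Q̄}[∫_0^1 Σ_t^{3/2} dt] < ∞. -/
open MeasureTheory

/-- For the scaled neutral Wright–Fisher diffusion `dM_t = √(M_t(1−M_t)/(1−t)) dB_t`,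
`M_0 = x₀ ∈ (0,1)` (encoded through its martingale problem), and
`Σ_t = M_t(1−M_t)/(1−t)`, one has `E[∫_0^1 Σ_t^{3/2} dt] < ∞`. -/
theorem stmt_17 {Ω : Type*} {m0 : MeasurableSpace Ω} (ℱ : Filtration ℝ m0)
    (P : Measure Ω) [IsProbabilityMeasure P] (M : ℝ → Ω → ℝ) (x₀ : ℝ)
    (hx : x₀ ∈ Set.Ioo (0:ℝ) 1)
    (hM0 : ∀ ω, M 0 ω = x₀)
    (hrange : ∀ s ω, M s ω ∈ Set.Icc (0:ℝ) 1)
    (hadapted : Adapted ℱ M)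
    (hcont : ∀ ω, Continuous fun s => M s ω)
    (hMP : ∀ f : ℝ → ℝ, ContDiff ℝ 2 f → ∀ u v, 0 ≤ u → u ≤ v → v < 1 →
      P[(fun ω => f (M v ω)
          - (1/2) * ∫ r in u..v, (M r ω * (1 - M r ω) / (1 - r)) * deriv (deriv f) (M r ω))
        | ℱ u] =ᵐ[P] fun ω => f (M u ω)) :
    ∫⁻ ω, (∫⁻ t in Set.Ioo (0:ℝ) 1,
        ENNReal.ofReal ((M t ω * (1 - M t ω) / (1 - t)) ^ ((3:ℝ)/2))) ∂P < ⊤ := by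
  classical
  set c : ℝ := x₀ * (1 - x₀) with hc
  -- basic bounds
  have hfb : ∀ x : ℝ, x ∈ Set.Icc (0:ℝ) 1 → 0 ≤ x * (1 - x) ∧ x * (1 - x) ≤ 1/4 := by
    rintro x ⟨h0, h1⟩
    constructor
    · nlinarith
    · nlinarith [sq_nonneg (x - 1/2)]
  -- the test function
  have hfC2 : ContDiff ℝ 2 (fun x : ℝ => x * (1 - x)) :=
    contDiff_id.mul (contDiff_const.sub contDiff_id)
  have hderiv2 : deriv (deriv (fun x : ℝ => x * (1 - x))) = fun _ => (-2 : ℝ) := by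
    have h1 : deriv (fun x : ℝ => x * (1 - x)) = fun x => 1 - 2 * x := by
      funext x
      have : HasDerivAt (fun x : ℝ => x * (1 - x)) (1 - 2 * x) x := by
        have := (hasDerivAt_id x).mul ((hasDerivAt_const x (1:ℝ)).sub (hasDerivAt_id x))
        refine this.congr_deriv ?_
        simp only [Pi.sub_apply, id, one_mul]; ring
      exact this.deriv
    rw [h1]
    funext x
    have : HasDerivAt (fun x : ℝ => 1 - 2 * x) (-2) x := by
      simpa using ((hasDerivAt_id x).const_mul (2:ℝ)).const_sub 1
    exact this.deriv
  -- measurability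
  have hSMt : ∀ t, StronglyMeasurable (M t) := fun t => ((hadapted t).mono (ℱ.le t) le_rfl).stronglyMeasurable
  have hMjoint : StronglyMeasurable (Function.uncurry M) :=
    stronglyMeasurable_uncurry_of_continuous_of_stronglyMeasurable hcont hSMt
  have hMjm : Measurable (fun p : ℝ × Ω => M p.1 p.2) := hMjoint.measurable
  have hSjm : Measurable (fun p : ℝ × Ω => M p.1 p.2 * (1 - M p.1 p.2) / (1 - p.1)) :=
    (hMjm.mul (measurable_const.sub hMjm)).div (measurable_const.sub measurable_fst)
  -- the mean of M_t (1 - M_t)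
  set h : ℝ → ℝ := fun t => ∫ ω, M t ω * (1 - M t ω) ∂P with hh
  have hGmeas : ∀ t, StronglyMeasurable (fun ω => M t ω * (1 - M t ω)) :=
    fun t => (hSMt t).mul (stronglyMeasurable_const.sub (hSMt t))
  have hGint : ∀ t, Integrable (fun ω => M t ω * (1 - M t ω)) P := by
    intro t
    refine (integrable_const (1/4 : ℝ)).mono' (hGmeas t).aestronglyMeasurable ?_
    refine Filter.Eventually.of_forall fun ω => ?_
    have := hfb _ (hrange t ω)
    rw [Real.norm_eq_abs, abs_of_nonneg this.1]
    exact this.2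
  have hh_cont : Continuous h := by
    refine continuous_of_dominated (fun t => (hGmeas t).aestronglyMeasurable)
      (fun t => Filter.Eventually.of_forall fun ω => ?_) (integrable_const (1/4 : ℝ))
      (Filter.Eventually.of_forall fun ω => ((hcont ω).mul (continuous_const.sub (hcont ω))))
    have := hfb _ (hrange t ω)
    rw [Real.norm_eq_abs, abs_of_nonneg this.1]
    exact this.2
  have hh0 : h 0 = c := by
    simp only [hh, hM0]
    simp [hc]
  have hSbound : ∀ r ∈ Set.Ioc (0:ℝ) 1, r < 1 → True := fun _ _ _ => trivial
  have key : ∀ v : ℝ, 0 ≤ v → v < 1 →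
      h v = c - ∫ r in (0:ℝ)..v, h r / (1 - r) := by
    intro v hv0 hv1
    have hMPv := hMP (fun x => x * (1 - x)) hfC2 0 v le_rfl hv0 hv1
    set F : Ω → ℝ := fun ω => M v ω * (1 - M v ω)
      + ∫ r in Set.Ioc (0:ℝ) v, M r ω * (1 - M r ω) / (1 - r) with hF
    have hFeq : (fun ω => (fun x : ℝ => x * (1 - x)) (M v ω)
          - (1/2) * ∫ r in (0:ℝ)..v,
            (M r ω * (1 - M r ω) / (1 - r)) * deriv (deriv (fun x : ℝ => x * (1 - x))) (M r ω))
        = F := by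
      funext ω
      simp only [hderiv2, hF]
      rw [intervalIntegral.integral_mul_const, intervalIntegral.integral_of_le hv0]
      ring
    rw [hFeq] at hMPv
    have h1mv : (0:ℝ) < 1 - v := sub_pos.mpr hv1
    have hSb : ∀ r ∈ Set.Ioc (0:ℝ) v, ∀ ω,
        ‖M r ω * (1 - M r ω) / (1 - r)‖ ≤ (1/4) / (1 - v) := by
      intro r hr ω
      have h1mr : (0:ℝ) < 1 - r := sub_pos.mpr (lt_of_le_of_lt hr.2 hv1)
      have hb := hfb _ (hrange r ω)
      rw [Real.norm_eq_abs, abs_of_nonneg (div_nonneg hb.1 h1mr.le)]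
      exact div_le_div₀ (by norm_num) hb.2 h1mv (by linarith [hr.2])
    have hSint_meas : StronglyMeasurable
        (fun ω => ∫ r in Set.Ioc (0:ℝ) v, M r ω * (1 - M r ω) / (1 - r)) := by
      have hjm : StronglyMeasurable (fun p : Ω × ℝ => M p.2 p.1 * (1 - M p.2 p.1) / (1 - p.2)) :=
        (hSjm.comp measurable_swap).stronglyMeasurable
      exact hjm.integral_prod_right'
    have hSint_bound : ∀ ω,
        ‖∫ r in Set.Ioc (0:ℝ) v, M r ω * (1 - M r ω) / (1 - r)‖ ≤ (1/4) / (1 - v) * |v - 0| := by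
      intro ω
      rw [← intervalIntegral.integral_of_le hv0]
      refine intervalIntegral.norm_integral_le_of_norm_le_const fun r hr => ?_
      rw [Set.uIoc_of_le hv0] at hr
      exact hSb r hr ω
    have hSint_int : Integrable
        (fun ω => ∫ r in Set.Ioc (0:ℝ) v, M r ω * (1 - M r ω) / (1 - r)) P := by
      refine (integrable_const ((1/4) / (1 - v) * |v - 0|)).mono'
        hSint_meas.aestronglyMeasurable ?_
      exact Filter.Eventually.of_forall hSint_bound
    have hFint : Integrable F P := (hGint v).add hSint_int
    haveI : SigmaFinite (P.trim (ℱ.le 0)) := by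
      exact sigmaFiniteTrim_mono _ le_rfl
    have hEF : ∫ ω, F ω ∂P = c := by
      have h1 : ∫ ω, (P[F|ℱ 0]) ω ∂P = ∫ ω, F ω ∂P := integral_condExp (ℱ.le 0)
      have h2 : ∫ ω, (P[F|ℱ 0]) ω ∂P
          = ∫ ω, (fun ω => (fun x : ℝ => x * (1 - x)) (M 0 ω)) ω ∂P := integral_congr_ae hMPv
      rw [← h1, h2]
      simp [hM0, hc]
    have hsplit : ∫ ω, F ω ∂P = h v
        + ∫ ω, (∫ r in Set.Ioc (0:ℝ) v, M r ω * (1 - M r ω) / (1 - r)) ∂P :=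
      integral_add (hGint v) hSint_int
    haveI : IsFiniteMeasure (volume.restrict (Set.Ioc (0:ℝ) v)) := by
      constructor
      rw [Measure.restrict_apply_univ, Real.volume_Ioc]
      exact ENNReal.ofReal_lt_top
    have hprod : Integrable
        (Function.uncurry fun ω r => M r ω * (1 - M r ω) / (1 - r))
        (P.prod (volume.restrict (Set.Ioc (0:ℝ) v))) := by
      constructor
      · exact (hSjm.comp measurable_swap).aestronglyMeasurable
      · refine HasFiniteIntegral.of_bounded (C := (1/4) / (1 - v)) ?_
        have heq : P.prod (volume.restrict (Set.Ioc (0:ℝ) v))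
            = ((P.restrict Set.univ).prod (volume.restrict (Set.Ioc (0:ℝ) v))) := by
          rw [Measure.restrict_univ]
        rw [heq, Measure.prod_restrict]
        filter_upwards [ae_restrict_mem (MeasurableSet.univ.prod measurableSet_Ioc)] with p hp
        exact hSb p.2 hp.2 p.1
    have hswap := integral_integral_swap hprod
    have hinner : ∀ r : ℝ, (∫ ω, M r ω * (1 - M r ω) / (1 - r) ∂P) = h r / (1 - r) :=
      fun r => integral_div _ _
    have hO : ∫ ω, (∫ r in Set.Ioc (0:ℝ) v, M r ω * (1 - M r ω) / (1 - r)) ∂P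
        = ∫ r in (0:ℝ)..v, h r / (1 - r) := by
      rw [hswap, intervalIntegral.integral_of_le hv0]
      exact setIntegral_congr_fun measurableSet_Ioc fun r _ => hinner r
    rw [hsplit, hO] at hEF
    linarith
  -- solving the ODE: h t = c * (1 - t) on [0,1)
  have hode : ∀ t : ℝ, 0 ≤ t → t < 1 → h t / (1 - t) = c := by
    intro t ht0 ht1
    set q : ℝ → ℝ := fun r => h r / (1 - r) with hq
    have hqcont : ContinuousOn q (Set.Iio (1:ℝ)) := by
      refine ContinuousOn.div hh_cont.continuousOn
        (continuous_const.sub continuous_id).continuousOn fun x hx => ?_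
      exact (sub_pos.mpr hx).ne'
    have hkey' : ∀ s ∈ Set.Ico (0:ℝ) 1, h s = c - ∫ r in (0:ℝ)..s, q r :=
      fun s hs => key s hs.1 hs.2
    have hderivq : ∀ x ∈ Set.Ico (0:ℝ) t, HasDerivWithinAt q 0 (Set.Ici x) x := by
      intro x hx
      have hx1 : x < 1 := hx.2.trans ht1
      have h1mx : (0:ℝ) < 1 - x := sub_pos.mpr hx1
      have hII : IntervalIntegrable q volume 0 x := by
        refine (hqcont.mono fun y hy => ?_).intervalIntegrable
        rw [Set.uIcc_of_le hx.1] at hy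
        exact lt_of_le_of_lt hy.2 hx1
      have hmeasAt : StronglyMeasurableAtFilter q (nhds x) :=
        hqcont.stronglyMeasurableAtFilter isOpen_Iio x hx1
      have hcontAt : ContinuousAt q x := hqcont.continuousAt (Iio_mem_nhds hx1)
      have hG : HasDerivAt (fun s => c - ∫ r in (0:ℝ)..s, q r) (-(q x)) x := by
        have := intervalIntegral.integral_hasDerivAt_right hII hmeasAt hcontAt
        simpa using this.const_sub c
      have hhx : HasDerivWithinAt h (-(q x)) (Set.Ici x) x := by
        refine (hG.hasDerivWithinAt).congr_of_eventuallyEq ?_ (hkey' x ⟨hx.1, hx1⟩)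
        filter_upwards [self_mem_nhdsWithin,
          mem_nhdsWithin_of_mem_nhds (Iio_mem_nhds hx1)] with s hs1 hs2
        exact hkey' s ⟨le_trans hx.1 hs1, hs2⟩
      have hden : HasDerivWithinAt (fun s : ℝ => 1 - s) (-1) (Set.Ici x) x :=
        ((hasDerivAt_id x).const_sub 1).hasDerivWithinAt
      have hdiv := hhx.div hden h1mx.ne'
      refine hdiv.congr_deriv ?_
      rw [hq]
      field_simp
      ring
    have hconst := constant_of_has_deriv_right_zero
      (f := q) (a := 0) (b := t)
      (hqcont.mono fun y hy => lt_of_le_of_lt hy.2 ht1) hderivq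
    have hqt : q t = q 0 := hconst t ⟨ht0, le_rfl⟩
    have hq0 : q 0 = c := by
      simp only [hq]
      rw [hh0]
      norm_num
    rw [← hq0]
    exact hqt
  -- final assembly
  have hswapAE : AEMeasurable
      (Function.uncurry fun ω t =>
        ENNReal.ofReal ((M t ω * (1 - M t ω) / (1 - t)) ^ ((3:ℝ)/2)))
      (P.prod (volume.restrict (Set.Ioo (0:ℝ) 1))) := by
    refine Measurable.aemeasurable ?_
    exact ENNReal.measurable_ofReal.comp
      (((hSjm.comp measurable_swap)).pow_const _)
  rw [lintegral_lintegral_swap hswapAE]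
  have hbound : ∀ t ∈ Set.Ioo (0:ℝ) 1,
      (∫⁻ ω, ENNReal.ofReal ((M t ω * (1 - M t ω) / (1 - t)) ^ ((3:ℝ)/2)) ∂P)
        ≤ ENNReal.ofReal (c / (2 * Real.sqrt (1 - t))) := by
    intro t ht
    have h1mt : (0:ℝ) < 1 - t := sub_pos.mpr ht.2
    have hsqrt_pos : (0:ℝ) < Real.sqrt (1 - t) := Real.sqrt_pos.mpr h1mt
    set K : ℝ := 1 / (2 * Real.sqrt (1 - t)) with hK
    have hK0 : 0 ≤ K := by positivity
    have hptwise : ∀ ω, (M t ω * (1 - M t ω) / (1 - t)) ^ ((3:ℝ)/2)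
        ≤ (M t ω * (1 - M t ω) / (1 - t)) * K := by
      intro ω
      set a : ℝ := M t ω * (1 - M t ω) / (1 - t) with ha
      have hb := hfb _ (hrange t ω)
      have ha0 : 0 ≤ a := div_nonneg hb.1 h1mt.le
      have hau : a ≤ 1 / (4 * (1 - t)) := by
        rw [ha]
        rw [div_le_div_iff₀ h1mt (by positivity)]
        nlinarith [hb.2, h1mt]
      have hKsq : K ^ 2 = 1 / (4 * (1 - t)) := by
        rw [hK, div_pow, mul_pow, Real.sq_sqrt h1mt.le]
        norm_num
      have hsq : Real.sqrt a ≤ K := by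
        calc Real.sqrt a ≤ Real.sqrt (K ^ 2) :=
              Real.sqrt_le_sqrt (by rw [hKsq]; exact hau)
          _ = K := Real.sqrt_sq hK0
      have hsplit32 : a ^ ((3:ℝ)/2) = a * Real.sqrt a := by
        rcases eq_or_lt_of_le ha0 with h0 | h0
        · rw [← h0, Real.zero_rpow (by norm_num), Real.sqrt_zero, mul_zero]
        · have h32 : (3:ℝ)/2 = 1 + 1/2 := by norm_num
          rw [h32, Real.rpow_add h0, Real.rpow_one, Real.sqrt_eq_rpow]
      rw [hsplit32]
      exact mul_le_mul_of_nonneg_left hsq ha0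
    have hSmeas : Measurable (fun ω => M t ω * (1 - M t ω) / (1 - t)) :=
      (((hSMt t).measurable).mul (measurable_const.sub (hSMt t).measurable)).div
        measurable_const
    have hSint : Integrable (fun ω => M t ω * (1 - M t ω) / (1 - t)) P :=
      (hGint t).div_const (1 - t)
    have hEc : ∫ ω, M t ω * (1 - M t ω) / (1 - t) ∂P = c := by
      rw [integral_div]
      exact hode t ht.1.le ht.2
    calc (∫⁻ ω, ENNReal.ofReal ((M t ω * (1 - M t ω) / (1 - t)) ^ ((3:ℝ)/2)) ∂P)
        ≤ ∫⁻ ω, ENNReal.ofReal ((M t ω * (1 - M t ω) / (1 - t)) * K) ∂P :=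
          lintegral_mono fun ω => ENNReal.ofReal_le_ofReal (hptwise ω)
      _ = ∫⁻ ω, ENNReal.ofReal (M t ω * (1 - M t ω) / (1 - t)) * ENNReal.ofReal K ∂P := by
          congr 1
          funext ω
          exact ENNReal.ofReal_mul' hK0
      _ = (∫⁻ ω, ENNReal.ofReal (M t ω * (1 - M t ω) / (1 - t)) ∂P) * ENNReal.ofReal K :=
          lintegral_mul_const _ (ENNReal.measurable_ofReal.comp hSmeas)
      _ = ENNReal.ofReal c * ENNReal.ofReal K := by
          rw [← ofReal_integral_eq_lintegral_ofReal hSint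
            (Filter.Eventually.of_forall fun ω => div_nonneg (hfb _ (hrange t ω)).1 h1mt.le),
            hEc]
      _ = ENNReal.ofReal (c / (2 * Real.sqrt (1 - t))) := by
          have hc0 : (0:ℝ) ≤ c := by rw [hc]; nlinarith [hx.1, hx.2]
          rw [← ENNReal.ofReal_mul hc0, hK, mul_one_div]
  have hint : IntegrableOn (fun t => c / (2 * Real.sqrt (1 - t))) (Set.Ioo (0:ℝ) 1) volume := by
    have h1 : IntervalIntegrable (fun x : ℝ => x ^ (-(1:ℝ)/2)) volume 0 1 :=
      intervalIntegral.intervalIntegrable_rpow' (by norm_num)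
    have h2 : IntervalIntegrable (fun x : ℝ => (1 - x) ^ (-(1:ℝ)/2)) volume 0 1 := by
      have := h1.comp_sub_left 1
      simpa using this.symm
    have h3 : IntegrableOn (fun x : ℝ => (1 - x) ^ (-(1:ℝ)/2)) (Set.Ioo (0:ℝ) 1) volume :=
      h2.1.mono_set Set.Ioo_subset_Ioc_self
    have h4 := h3.const_mul (c / 2)
    refine Integrable.congr h4 ?_
    filter_upwards [ae_restrict_mem measurableSet_Ioo] with t ht
    have h1mt : (0:ℝ) < 1 - t := sub_pos.mpr ht.2
    have hsp : (0:ℝ) < Real.sqrt (1 - t) := Real.sqrt_pos.mpr h1mt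
    have hrw : (1 - t) ^ ((-1:ℝ)/2) = (Real.sqrt (1 - t))⁻¹ := by
      rw [show ((-1:ℝ)/2) = -((1:ℝ)/2) by norm_num, Real.rpow_neg h1mt.le, Real.sqrt_eq_rpow]
    rw [hrw]
    field_simp
  calc (∫⁻ t in Set.Ioo (0:ℝ) 1,
        ∫⁻ ω, ENNReal.ofReal ((M t ω * (1 - M t ω) / (1 - t)) ^ ((3:ℝ)/2)) ∂P)
      ≤ ∫⁻ t in Set.Ioo (0:ℝ) 1, ENNReal.ofReal (c / (2 * Real.sqrt (1 - t))) := by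
        refine lintegral_mono_ae ?_
        filter_upwards [ae_restrict_mem measurableSet_Ioo] with t ht
        exact hbound t ht
    _ < ⊤ := hint.lintegral_lt_top
end
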